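/- arXiv:2208.07916 — 4 statements merged into one kernel-verified Lean document; each statement's English description precedes it below -/
import Mathlib

section
/- Let E be a free abelian group of finite rank with a symmetric bilinear form, κ ∈ E ⊗ ℝ non-resonant (⟨κ,a⟩ ≠ 0 for all nonzero a ∈ E), and suppose there exist nonzero δ₁, δ₂ ∈ E that are linearly independent, both isotropic, and mutually orthogonal. Then for every λ > 0 the set Δ = { δ ∈ E : ⟨δ,δ⟩ = 0 and 0 < ⟨κ,δ⟩ ≤ λ } is infinite. -/
/-- for a lattice `E` (finitely generated ℤ-submodule of `V = E ⊗ ℝ`) with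
an integer-valued symmetric bilinear form, a non-resonant `κ`, and two nonzero,
linearly independent, isotropic, mutually orthogonal classes `δ₁, δ₂ ∈ E`, the set
`Δ = {δ ∈ E : ⟨δ,δ⟩ = 0, 0 < ⟨κ,δ⟩ ≤ λ}` is infinite for every `λ > 0`. -/
theorem stmt_3 (V : Type*) [AddCommGroup V] [Module ℝ V] [FiniteDimensional ℝ V]
    (B : LinearMap.BilinForm ℝ V) (hsymm : B.IsSymm)
    (E : Submodule ℤ V) (hfg : E.FG)
    (hint : ∀ x ∈ E, ∀ y ∈ E, ∃ n : ℤ, B x y = n)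
    (κ : V) (hres : ∀ a ∈ E, a ≠ 0 → B κ a ≠ 0)
    (δ₁ δ₂ : V) (h1E : δ₁ ∈ E) (h2E : δ₂ ∈ E) (h1 : δ₁ ≠ 0) (h2 : δ₂ ≠ 0)
    (hind : ∀ m n : ℤ, m • δ₁ + n • δ₂ = 0 → m = 0 ∧ n = 0)
    (hiso1 : B δ₁ δ₁ = 0) (hiso2 : B δ₂ δ₂ = 0) (horth : B δ₁ δ₂ = 0)
    (lam : ℝ) (hlam : 0 < lam) :
    {δ : V | δ ∈ E ∧ B δ δ = 0 ∧ 0 < B κ δ ∧ B κ δ ≤ lam}.Infinite := by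
  set c₁ : ℝ := B κ δ₁ with hc₁
  set c₂ : ℝ := B κ δ₂ with hc₂
  have hc₁0 : c₁ ≠ 0 := hres δ₁ h1E h1
  have hc₂0 : c₂ ≠ 0 := hres δ₂ h2E h2
  have horth' : B δ₂ δ₁ = 0 := by
    have := hsymm.eq δ₁ δ₂; rw [horth] at this; simpa using this.symm
  -- vector associated to a pair of integers
  have hval : ∀ m n : ℤ, B κ (m • δ₁ + n • δ₂) = m * c₁ + n * c₂ := by
    intro m n
    simp [← Int.cast_smul_eq_zsmul ℝ, map_add, map_smul, hc₁, hc₂, mul_comm]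
  have hiso : ∀ m n : ℤ, B (m • δ₁ + n • δ₂) (m • δ₁ + n • δ₂) = 0 := by
    intro m n
    simp [← Int.cast_smul_eq_zsmul ℝ, map_add, map_smul, hiso1, hiso2, horth, horth']
  set S : AddSubgroup ℝ := AddSubgroup.closure {c₁, c₂} with hS
  have hmemS : ∀ x, x ∈ S ↔ ∃ m n : ℤ, m • c₁ + n • c₂ = x := fun x =>
    AddSubgroup.mem_closure_pair
  -- S is dense
  have hdense : Dense (S : Set ℝ) := by
    rcases S.dense_or_cyclic with h | ⟨a, ha⟩
    · exact h
    · exfalso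
      have hc₁S : c₁ ∈ S := AddSubgroup.subset_closure (by simp)
      have hc₂S : c₂ ∈ S := AddSubgroup.subset_closure (by simp)
      rw [ha, AddSubgroup.mem_closure_singleton] at hc₁S hc₂S
      obtain ⟨m, hm⟩ := hc₁S
      obtain ⟨n, hn⟩ := hc₂S
      have hn0 : n ≠ 0 := by rintro rfl; simp at hn; exact hc₂0 hn.symm
      have hm0 : m ≠ 0 := by rintro rfl; simp at hm; exact hc₁0 hm.symm
      have hv : B κ (n • δ₁ + (-m) • δ₂) = 0 := by
        rw [hval, ← hm, ← hn, zsmul_eq_mul, zsmul_eq_mul]; push_cast; ring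
      have hvE : n • δ₁ + (-m) • δ₂ ∈ E := by
        exact add_mem (zsmul_mem h1E n) (zsmul_mem h2E (-m))
      have hvne : n • δ₁ + (-m) • δ₂ ≠ 0 := by
        intro h0
        exact hn0 (hind n (-m) h0).1
      exact hres _ hvE hvne hv
  -- the set of values in (0, lam] attained by S is infinite
  have hT : (↑S ∩ Set.Ioo (0:ℝ) lam).Infinite := by
    by_contra hfin
    rw [Set.not_infinite] at hfin
    have hne : (↑S ∩ Set.Ioo (0:ℝ) lam).Nonempty := by
      rcases hdense.exists_mem_open (isOpen_Ioo : IsOpen (Set.Ioo (0:ℝ) lam))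
          ⟨lam/2, Set.mem_Ioo.2 ⟨by linarith, by linarith⟩⟩ with ⟨x, hx, hx'⟩
      exact ⟨x, hx, hx'⟩
    obtain ⟨x₀, hx₀, hmin⟩ := Set.exists_min_image _ id hfin hne
    have hx₀pos : (0:ℝ) < x₀ := hx₀.2.1
    rcases hdense.exists_mem_open isOpen_Ioo
        (⟨x₀/2, Set.mem_Ioo.2 ⟨by linarith, by linarith⟩⟩ :
          (Set.Ioo (0:ℝ) x₀).Nonempty) with ⟨y, hyS, hy⟩
    have hyT : y ∈ ↑S ∩ Set.Ioo (0:ℝ) lam :=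
      ⟨hyS, hy.1, hy.2.trans hx₀.2.2⟩
    have := hmin y hyT
    simp only [id] at this
    exact absurd this (not_le.mpr hy.2)
  -- map each value to a vector in Δ
  classical
  set g : ℝ → V := fun x =>
    if h : ∃ m n : ℤ, m • c₁ + n • c₂ = x then
      (h.choose) • δ₁ + (h.choose_spec.choose) • δ₂ else 0 with hg
  have hgspec : ∀ x ∈ (↑S ∩ Set.Ioo (0:ℝ) lam), B κ (g x) = x ∧
      g x ∈ {δ : V | δ ∈ E ∧ B δ δ = 0 ∧ 0 < B κ δ ∧ B κ δ ≤ lam} := by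
    intro x hx
    have h : ∃ m n : ℤ, m • c₁ + n • c₂ = x := (hmemS x).1 hx.1
    have hgx : g x = h.choose • δ₁ + h.choose_spec.choose • δ₂ := by
      simp only [hg]; rw [dif_pos h]
    have hBx : B κ (g x) = x := by
      rw [hgx, hval]
      have := h.choose_spec.choose_spec
      simpa only [zsmul_eq_mul] using this
    refine ⟨hBx, ?_⟩
    refine ⟨?_, ?_, ?_, ?_⟩
    · rw [hgx]; exact add_mem (zsmul_mem h1E _) (zsmul_mem h2E _)
    · rw [hgx]; exact hiso _ _
    · rw [hBx]; exact hx.2.1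
    · rw [hBx]; exact le_of_lt hx.2.2
  have himg : g '' (↑S ∩ Set.Ioo (0:ℝ) lam) ⊆
      {δ : V | δ ∈ E ∧ B δ δ = 0 ∧ 0 < B κ δ ∧ B κ δ ≤ lam} := by
    rintro _ ⟨x, hx, rfl⟩; exact (hgspec x hx).2
  have hinj : Set.InjOn g (↑S ∩ Set.Ioo (0:ℝ) lam) := by
    intro x hx y hy hxy
    have := (hgspec x hx).1
    rw [hxy, (hgspec y hy).1] at this
    exact this.symm
  exact Set.Infinite.mono himg ((hT.image hinj))
end

section
/- Let δ be an integral alternating bilinear form on L ≅ ℤ⁴ that is primitive (indivisible as an element of Λ²(L*)) and satisfies δ ∧ δ = 0 (equivalently, its Pfaffian vanishes). Then δ is decomposable: there exist α, β ∈ L* = Hom(L, ℤ) with δ = α ∧ β. -/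
/-- The standard basis vector `e i` of `ℤ⁴`. -/
noncomputable def stdE (i : Fin 4) : Fin 4 → ℤ := Pi.single i 1

/-- The bilinear form on `ℤ⁴` with matrix `c`. -/
noncomputable def bform (c : Fin 4 → Fin 4 → ℤ) : LinearMap.BilinForm ℤ (Fin 4 → ℤ) :=
  LinearMap.mk₂ ℤ (fun x y => ∑ i, ∑ j, c i j * (x i * y j))
    (by intro m1 m2 n; simp [Pi.add_apply, add_mul, mul_add, Finset.sum_add_distrib])
    (by intro r m n
        simp only [Pi.smul_apply, smul_eq_mul, Finset.mul_sum]
        exact Finset.sum_congr rfl fun i _ => Finset.sum_congr rfl fun j _ => by ring)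
    (by intro m n1 n2; simp [Pi.add_apply, add_mul, mul_add, Finset.sum_add_distrib])
    (by intro r m n
        simp only [Pi.smul_apply, smul_eq_mul, Finset.mul_sum]
        exact Finset.sum_congr rfl fun i _ => Finset.sum_congr rfl fun j _ => by ring)

lemma bform_apply (c : Fin 4 → Fin 4 → ℤ) (x y : Fin 4 → ℤ) :
    bform c x y = ∑ i, ∑ j, c i j * (x i * y j) := rfl

lemma bform_std (c : Fin 4 → Fin 4 → ℤ) (i j : Fin 4) :
    bform c (stdE i) (stdE j) = c i j := by
  simp [bform_apply, stdE, Pi.single_apply, mul_ite, ite_mul, Finset.sum_ite_eq',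
    Finset.mem_univ]

lemma bilin_ext {B C : LinearMap.BilinForm ℤ (Fin 4 → ℤ)}
    (h : ∀ i j, B (stdE i) (stdE j) = C (stdE i) (stdE j)) : B = C := by
  apply Module.Basis.ext (Pi.basisFun ℤ (Fin 4))
  intro i
  apply Module.Basis.ext (Pi.basisFun ℤ (Fin 4))
  intro j
  simpa [Pi.basisFun_apply, stdE] using h i j

/-- The linear functional `x ↦ ∑ i, v i * x i`. -/
noncomputable def mkLin (v : Fin 4 → ℤ) : (Fin 4 → ℤ) →ₗ[ℤ] ℤ :=
  ∑ i, v i • LinearMap.proj i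

lemma mkLin_apply (v x : Fin 4 → ℤ) : mkLin v x = ∑ i, v i * x i := by
  simp [mkLin]

/-- A vector `(a,b,c)` with unit gcd can be completed to a matrix of determinant 1
with rows `(a,b,c)`, `(p,q,r)`, `(s,t,w)`. -/
lemma sl3_complete (a b c : ℤ) (h : Int.gcd (Int.gcd a b : ℤ) c = 1) :
    ∃ p q r s t w : ℤ,
      a * (q * w - r * t) - b * (p * w - r * s) + c * (p * t - q * s) = 1 := by
  by_cases hg : Int.gcd a b = 0
  · obtain ⟨ha, hb⟩ := Int.gcd_eq_zero_iff.mp hg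
    rw [hg] at h
    have hc : c = 1 ∨ c = -1 := by
      have : c.natAbs = 1 := by simpa [Int.gcd] using h
      rcases Int.natAbs_eq c with h' | h' <;> omega
    refine ⟨1, 0, 0, 0, c, 0, ?_⟩
    subst ha hb
    rcases hc with rfl | rfl <;> ring
  · set g : ℤ := (Int.gcd a b : ℤ) with hgdef
    have hgne : g ≠ 0 := by rw [hgdef]; exact_mod_cast hg
    obtain ⟨a₁, ha₁⟩ : g ∣ a := Int.gcd_dvd_left a b
    obtain ⟨b₁, hb₁⟩ : g ∣ b := Int.gcd_dvd_right a b
    have hbez : g = a * Int.gcdA a b + b * Int.gcdB a b := Int.gcd_eq_gcd_ab a b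
    set X := Int.gcdA a b
    set Y := Int.gcdB a b
    have hone : a₁ * X + b₁ * Y = 1 := by
      have : g * (a₁ * X + b₁ * Y) = g * 1 := by
        rw [mul_one]; rw [ha₁, hb₁] at hbez; linarith [hbez]
      exact mul_left_cancel₀ hgne this
    have hbez2 : (1 : ℤ) = g * Int.gcdA g c + c * Int.gcdB g c := by
      have := Int.gcd_eq_gcd_ab g c
      rw [h] at this; exact_mod_cast this
    set u := Int.gcdA g c
    set v := Int.gcdB g c
    refine ⟨-Y, X, 0, -v * a₁, -v * b₁, u, ?_⟩
    have hg' : a * X + b * Y = g := by linarith [hbez]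
    linear_combination u * hg' + (c * v) * hone + hbez2.symm

/-- Dividing a triple by its gcd leaves a triple with unit gcd. -/
lemma gcd_div (n : ℕ) (hn : n ≠ 0) (a b c a₁ b₁ c₁ : ℤ)
    (ha : a = (n : ℤ) * a₁) (hb : b = (n : ℤ) * b₁) (hc : c = (n : ℤ) * c₁)
    (h : Int.gcd (Int.gcd a b : ℤ) c = n) :
    Int.gcd (Int.gcd a₁ b₁ : ℤ) c₁ = 1 := by
  subst ha hb hc
  rw [Int.gcd_mul_left] at h
  simp only [Int.natAbs_natCast] at h
  push_cast at h
  rw [Int.gcd_mul_left] at h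
  simp only [Int.natAbs_natCast] at h
  exact Nat.eq_of_mul_eq_mul_left (Nat.pos_of_ne_zero hn) (by rw [h, mul_one])

/-- Integer solution of the Plücker relation: any sextuple on the Plücker quadric
is the sextuple of 2×2 minors of a 2×4 integer matrix. -/
lemma plucker (a b c d e f : ℤ) (hrel : a * f - b * e + c * d = 0) :
    ∃ u0 u1 u2 u3 w0 w1 w2 w3 : ℤ,
      u0 * w1 - u1 * w0 = a ∧ u0 * w2 - u2 * w0 = b ∧ u0 * w3 - u3 * w0 = c ∧
      u1 * w2 - u2 * w1 = d ∧ u1 * w3 - u3 * w1 = e ∧ u2 * w3 - u3 * w2 = f := by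
  by_cases habc : a = 0 ∧ b = 0 ∧ c = 0
  · obtain ⟨rfl, rfl, rfl⟩ := habc
    by_cases hdef : d = 0 ∧ e = 0 ∧ f = 0
    · obtain ⟨rfl, rfl, rfl⟩ := hdef
      exact ⟨0,0,0,0,0,0,0,0, by norm_num⟩
    · set k : ℕ := Int.gcd (Int.gcd f (-e) : ℤ) d with hk
      have hkne : k ≠ 0 := by
        simp only [hk, Ne, Int.gcd_eq_zero_iff, Int.natCast_eq_zero, neg_eq_zero]
        tauto
      have hdvf : (k : ℤ) ∣ f := dvd_trans (Int.gcd_dvd_left _ _) (Int.gcd_dvd_left _ _)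
      have hdve : (k : ℤ) ∣ -e := dvd_trans (Int.gcd_dvd_left _ _) (Int.gcd_dvd_right _ _)
      have hdvd : (k : ℤ) ∣ d := Int.gcd_dvd_right _ _
      obtain ⟨f₁, hf₁⟩ := hdvf
      obtain ⟨e₁, he₁⟩ := hdve
      obtain ⟨d₁, hd₁⟩ := hdvd
      have hcop := gcd_div k hkne f (-e) d f₁ e₁ d₁ hf₁ he₁ hd₁ hk.symm
      obtain ⟨p, q, r, s, t, w, hdet⟩ := sl3_complete f₁ e₁ d₁ hcop
      refine ⟨0, t*d₁ - w*e₁, w*f₁ - s*d₁, s*e₁ - t*f₁,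
              0, (k:ℤ)*(e₁*r - d₁*q), (k:ℤ)*(d₁*p - f₁*r), (k:ℤ)*(f₁*q - e₁*p),
              by ring, by ring, by ring, ?_, ?_, ?_⟩
      · rw [hd₁]; linear_combination ((k:ℤ)*d₁) * hdet
      · rw [show e = -((k:ℤ)*e₁) by linarith [he₁]]
        linear_combination (-(k:ℤ)*e₁) * hdet
      · rw [hf₁]; linear_combination ((k:ℤ)*f₁) * hdet
  · set g : ℕ := Int.gcd (Int.gcd a b : ℤ) c with hg
    have hgne : g ≠ 0 := by
      simp only [hg, Ne, Int.gcd_eq_zero_iff, Int.natCast_eq_zero]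
      tauto
    have hdva : (g : ℤ) ∣ a := dvd_trans (Int.gcd_dvd_left _ _) (Int.gcd_dvd_left _ _)
    have hdvb : (g : ℤ) ∣ b := dvd_trans (Int.gcd_dvd_left _ _) (Int.gcd_dvd_right _ _)
    have hdvc : (g : ℤ) ∣ c := Int.gcd_dvd_right _ _
    obtain ⟨a₁, ha₁⟩ := hdva
    obtain ⟨b₁, hb₁⟩ := hdvb
    obtain ⟨c₁, hc₁⟩ := hdvc
    have hcop := gcd_div g hgne a b c a₁ b₁ c₁ ha₁ hb₁ hc₁ hg.symm
    obtain ⟨p, q, r, s, t, w, hdet⟩ := sl3_complete a₁ b₁ c₁ hcop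
    have hdot : a₁ * f - b₁ * e + c₁ * d = 0 := by
      have h2 : (g:ℤ) * (a₁ * f - b₁ * e + c₁ * d) = 0 := by
        rw [ha₁, hb₁, hc₁] at hrel; linarith [hrel]
      have : (g:ℤ) ≠ 0 := by exact_mod_cast hgne
      exact (mul_eq_zero.mp h2).resolve_left this
    set Qt : ℤ := s*f - t*e + w*d with hQt
    set Pt : ℤ := p*f - q*e + r*d with hPt
    refine ⟨0, a₁, b₁, c₁,
            -(g:ℤ), Qt*p - Pt*s, Qt*q - Pt*t, Qt*r - Pt*w,
            by rw [ha₁]; ring, by rw [hb₁]; ring, by rw [hc₁]; ring, ?_, ?_, ?_⟩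
    · linear_combination d * hdet - (p*t - q*s) * hdot
    · linear_combination e * hdet + (r*s - p*w) * hdot
    · linear_combination f * hdet - (q*w - r*t) * hdot

/-- a primitive integral alternating bilinear form `δ` on `L ≅ ℤ⁴` with
`δ ∧ δ = 0` (vanishing Pfaffian) is decomposable: `δ = α ∧ β` for some
`α, β ∈ L* = Hom(L, ℤ)`. -/
theorem stmt_5 (δ : LinearMap.BilinForm ℤ (Fin 4 → ℤ)) (halt : ∀ x, δ x x = 0)
    (hprim : ¬ ∃ (m : ℤ) (δ' : LinearMap.BilinForm ℤ (Fin 4 → ℤ)), 2 ≤ m ∧ δ = m • δ')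
    (hpf : δ (stdE 0) (stdE 1) * δ (stdE 2) (stdE 3)
         - δ (stdE 0) (stdE 2) * δ (stdE 1) (stdE 3)
         + δ (stdE 0) (stdE 3) * δ (stdE 1) (stdE 2) = 0) :
    ∃ α β : (Fin 4 → ℤ) →ₗ[ℤ] ℤ, ∀ x y, δ x y = α x * β y - α y * β x := by
  have hskew : ∀ x y, δ x y = -δ y x := by
    intro x y
    have h := halt (x + y)
    have hx := halt x
    have hy := halt y
    simp only [map_add, LinearMap.add_apply] at h
    linarith
  obtain ⟨u0, u1, u2, u3, w0, w1, w2, w3, h1, h2, h3, h4, h5, h6⟩ :=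
    plucker (δ (stdE 0) (stdE 1)) (δ (stdE 0) (stdE 2)) (δ (stdE 0) (stdE 3))
      (δ (stdE 1) (stdE 2)) (δ (stdE 1) (stdE 3)) (δ (stdE 2) (stdE 3))
      (by linarith [hpf])
  set u : Fin 4 → ℤ := ![u0, u1, u2, u3]
  set w : Fin 4 → ℤ := ![w0, w1, w2, w3]
  have hA : ∀ i j, δ (stdE i) (stdE j) = u i * w j - u j * w i := by
    intro i j
    fin_cases i <;> fin_cases j <;>
      simp only [u, w, Fin.isValue, Fin.zero_eta, Fin.mk_one,
        show (⟨2, by norm_num⟩ : Fin 4) = 2 from rfl,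
        show (⟨3, by norm_num⟩ : Fin 4) = 3 from rfl,
        Matrix.cons_val_zero, Matrix.cons_val_one, Matrix.head_cons,
        Matrix.cons_val_two, Matrix.tail_cons, Matrix.cons_val_three] <;>
      first
        | (rw [halt]; ring)
        | linarith [h1, h2, h3, h4, h5, h6,
            hskew (stdE 0) (stdE 1), hskew (stdE 0) (stdE 2), hskew (stdE 0) (stdE 3),
            hskew (stdE 1) (stdE 2), hskew (stdE 1) (stdE 3), hskew (stdE 2) (stdE 3)]
  have hδ : δ = bform (fun i j => u i * w j - u j * w i) :=
    bilin_ext fun i j => by rw [bform_std]; exact hA i j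
  refine ⟨mkLin u, mkLin w, fun x y => ?_⟩
  rw [hδ, bform_apply, mkLin_apply, mkLin_apply, mkLin_apply, mkLin_apply]
  simp only [Fin.sum_univ_four]
  ring
end

section
/- Let δ be an integral alternating bilinear form on L ≅ ℤ⁴ that is primitive and satisfies δ ∧ δ = 0. Then the kernel of δ, i.e. { v ∈ L : δ(v, w) = 0 for all w ∈ L }, is a direct summand of L of rank 2. -/
private lemma aux_two_le_rank {M : Type} [AddCommGroup M] [Module ℤ M]
    (K : Submodule ℤ M) (v w : M) (hv : v ∈ K) (hw : w ∈ K)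
    (φ ψ : M →ₗ[ℤ] ℤ) {x y : ℤ} (hx : x ≠ 0) (hy : y ≠ 0)
    (h1 : φ v = x) (h2 : φ w = 0) (h3 : ψ v = 0) (h4 : ψ w = y) :
    2 ≤ Module.rank ℤ K := by
  have hli : LinearIndependent ℤ ![(⟨v, hv⟩ : K), ⟨w, hw⟩] := by
    rw [LinearIndependent.pair_iff]
    intro s t hst
    have h0 : s • v + t • w = 0 := by
      have := congrArg (K.subtype) hst
      simpa using this
    have e1 : s * x = 0 := by
      have := congrArg φ h0
      simpa [map_add, map_smul, h1, h2, smul_eq_mul] using this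
    have e2 : t * y = 0 := by
      have := congrArg ψ h0
      simpa [map_add, map_smul, h3, h4, smul_eq_mul] using this
    constructor
    · rcases mul_eq_zero.1 e1 with h | h
      · exact h
      · exact absurd h hx
    · rcases mul_eq_zero.1 e2 with h | h
      · exact h
      · exact absurd h hy
  have := hli.cardinal_le_rank
  simpa using this

/-- the kernel of a primitive integral alternating bilinear form `δ` on
`L ≅ ℤ⁴` with vanishing Pfaffian is a direct summand of `L` of rank 2. -/
theorem stmt_6 (δ : LinearMap.BilinForm ℤ (Fin 4 → ℤ)) (halt : ∀ x, δ x x = 0)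
    (hprim : ¬ ∃ (m : ℤ) (δ' : LinearMap.BilinForm ℤ (Fin 4 → ℤ)), 2 ≤ m ∧ δ = m • δ')
    (hpf : δ (stdE 0) (stdE 1) * δ (stdE 2) (stdE 3)
         - δ (stdE 0) (stdE 2) * δ (stdE 1) (stdE 3)
         + δ (stdE 0) (stdE 3) * δ (stdE 1) (stdE 2) = 0) :
    ∃ C : Submodule ℤ (Fin 4 → ℤ),
      IsCompl (LinearMap.ker δ) C ∧
      Module.finrank ℤ (LinearMap.ker δ) = 2 := by
  classical
  set K : Submodule ℤ (Fin 4 → ℤ) := LinearMap.ker δ with hK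
  -- skew-symmetry
  have hskew : ∀ x y, δ y x = -δ x y := by
    intro x y
    have h := halt (x + y)
    simp only [map_add, LinearMap.add_apply, halt] at h
    linarith
  -- decomposition of a vector in the standard basis
  have hdec : ∀ u : Fin 4 → ℤ,
      u = u 0 • stdE 0 + u 1 • stdE 1 + u 2 • stdE 2 + u 3 • stdE 3 := by
    intro u
    funext j
    fin_cases j <;> simp [stdE, Pi.single_apply]
  -- full expansion of the form in coordinates
  have hfull : ∀ x y : Fin 4 → ℤ, δ x y =
      (x 0 * y 1 - x 1 * y 0) * δ (stdE 0) (stdE 1)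
    + (x 0 * y 2 - x 2 * y 0) * δ (stdE 0) (stdE 2)
    + (x 0 * y 3 - x 3 * y 0) * δ (stdE 0) (stdE 3)
    + (x 1 * y 2 - x 2 * y 1) * δ (stdE 1) (stdE 2)
    + (x 1 * y 3 - x 3 * y 1) * δ (stdE 1) (stdE 3)
    + (x 2 * y 3 - x 3 * y 2) * δ (stdE 2) (stdE 3) := by
    intro x y
    conv_lhs => rw [hdec x, hdec y]
    simp only [map_add, map_smul, LinearMap.add_apply, LinearMap.smul_apply, smul_eq_mul,
      halt, hskew (stdE 0) (stdE 1), hskew (stdE 0) (stdE 2), hskew (stdE 0) (stdE 3),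
      hskew (stdE 1) (stdE 2), hskew (stdE 1) (stdE 3), hskew (stdE 2) (stdE 3)]
    ring_nf
  -- membership criterion for the kernel
  have hmem : ∀ u : Fin 4 → ℤ, (∀ z, δ u z = 0) → u ∈ K := by
    intro u h
    rw [hK, LinearMap.mem_ker]
    exact LinearMap.ext h
  -- notation for entries
  -- a = δ e0 e1, b = δ e0 e2, c = δ e0 e3, d = δ e1 e2, e = δ e1 e3, f = δ e2 e3
  -- the four explicit kernel vectors
  have hv1 : (![δ (stdE 1) (stdE 2), -δ (stdE 0) (stdE 2), δ (stdE 0) (stdE 1), 0] : Fin 4 → ℤ) ∈ K := by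
    apply hmem
    intro z
    rw [hfull]
    simp only [Matrix.cons_val_zero, Matrix.cons_val_one, Matrix.head_cons,
      Matrix.cons_val_two, Matrix.tail_cons, Matrix.cons_val_three]
    linear_combination (z 3 : ℤ) * hpf
  have hv2 : (![δ (stdE 1) (stdE 3), -δ (stdE 0) (stdE 3), 0, δ (stdE 0) (stdE 1)] : Fin 4 → ℤ) ∈ K := by
    apply hmem
    intro z
    rw [hfull]
    simp only [Matrix.cons_val_zero, Matrix.cons_val_one, Matrix.head_cons,
      Matrix.cons_val_two, Matrix.tail_cons, Matrix.cons_val_three]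
    linear_combination (-(z 2) : ℤ) * hpf
  have hv3 : (![δ (stdE 2) (stdE 3), 0, -δ (stdE 0) (stdE 3), δ (stdE 0) (stdE 2)] : Fin 4 → ℤ) ∈ K := by
    apply hmem
    intro z
    rw [hfull]
    simp only [Matrix.cons_val_zero, Matrix.cons_val_one, Matrix.head_cons,
      Matrix.cons_val_two, Matrix.tail_cons, Matrix.cons_val_three]
    linear_combination (z 1 : ℤ) * hpf
  have hv4 : (![0, δ (stdE 2) (stdE 3), -δ (stdE 1) (stdE 3), δ (stdE 1) (stdE 2)] : Fin 4 → ℤ) ∈ K := by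
    apply hmem
    intro z
    rw [hfull]
    simp only [Matrix.cons_val_zero, Matrix.cons_val_one, Matrix.head_cons,
      Matrix.cons_val_two, Matrix.tail_cons, Matrix.cons_val_three]
    linear_combination (-(z 0) : ℤ) * hpf
  -- upper bound for the rank of the kernel
  have upper : ∀ p q : Fin 4, δ (stdE p) (stdE q) ≠ 0 → Module.rank ℤ K ≤ 2 := by
    intro p q hx
    set g : (Fin 4 → ℤ) →ₗ[ℤ] ℤ × ℤ :=
      LinearMap.prod (δ.flip (stdE p)) (δ.flip (stdE q)) with hg
    have hle : K ≤ LinearMap.ker g := by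
      intro u hu
      rw [hK, LinearMap.mem_ker] at hu
      rw [LinearMap.mem_ker]
      have h1 : δ u (stdE p) = 0 := by rw [hu]; rfl
      have h2 : δ u (stdE q) = 0 := by rw [hu]; rfl
      simp [hg, LinearMap.prod_apply, LinearMap.flip_apply, h1, h2, Prod.ext_iff]
    have hy : δ (stdE q) (stdE p) ≠ 0 := by
      rw [hskew]
      exact neg_ne_zero.2 hx
    have h2le : 2 ≤ Module.rank ℤ (LinearMap.range g) := by
      refine aux_two_le_rank _ (g (stdE q)) (g (stdE p)) ⟨_, rfl⟩ ⟨_, rfl⟩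
        (LinearMap.fst ℤ ℤ ℤ) (LinearMap.snd ℤ ℤ ℤ) hy hx ?_ ?_ ?_ ?_ <;>
        simp [hg, LinearMap.flip_apply, halt]
    have hle2 : Module.rank ℤ (LinearMap.range g) ≤ 2 := by
      have := Submodule.rank_le (LinearMap.range g)
      simpa [one_add_one_eq_two] using this
    have heq : Module.rank ℤ (LinearMap.range g) = 2 := le_antisymm hle2 h2le
    have hrn := LinearMap.rank_range_add_rank_ker g
    rw [heq] at hrn
    have h4 : Module.rank ℤ (Fin 4 → ℤ) = 4 := by simp
    rw [h4] at hrn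
    have hker2 : Module.rank ℤ (LinearMap.ker g) = 2 := by
      have h24 : (2 : Cardinal) + Module.rank ℤ (LinearMap.ker g) = 2 + 2 := by
        rw [hrn]; norm_num
      exact Cardinal.eq_of_add_eq_add_left h24 (by exact_mod_cast Cardinal.nat_lt_aleph0 2)
    calc Module.rank ℤ K ≤ Module.rank ℤ (LinearMap.ker g) := Submodule.rank_mono hle
      _ = 2 := hker2
  -- some entry is nonzero
  have hne : δ (stdE 0) (stdE 1) ≠ 0 ∨ δ (stdE 0) (stdE 2) ≠ 0 ∨ δ (stdE 0) (stdE 3) ≠ 0 ∨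
      δ (stdE 1) (stdE 2) ≠ 0 ∨ δ (stdE 1) (stdE 3) ≠ 0 ∨ δ (stdE 2) (stdE 3) ≠ 0 := by
    by_contra h
    push_neg at h
    obtain ⟨h1, h2, h3, h4, h5, h6⟩ := h
    apply hprim
    refine ⟨2, 0, le_refl _, ?_⟩
    rw [smul_zero]
    apply LinearMap.ext
    intro x
    apply LinearMap.ext
    intro y
    rw [hfull, h1, h2, h3, h4, h5, h6]
    simp
  -- rank of the kernel is 2
  have hrank : Module.rank ℤ K = 2 := by
    rcases hne with h | h | h | h | h | h
    · refine le_antisymm (upper 0 1 h) ?_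
      exact aux_two_le_rank K _ _ hv1 hv2 (LinearMap.proj 2) (LinearMap.proj 3) h h
        (by simp) (by simp) (by simp) (by simp)
    · refine le_antisymm (upper 0 2 h) ?_
      exact aux_two_le_rank K _ _ hv1 hv3 (LinearMap.proj 1) (LinearMap.proj 3)
        (neg_ne_zero.2 h) h (by simp) (by simp) (by simp) (by simp)
    · refine le_antisymm (upper 0 3 h) ?_
      exact aux_two_le_rank K _ _ hv2 hv3 (LinearMap.proj 1) (LinearMap.proj 2)
        (neg_ne_zero.2 h) (neg_ne_zero.2 h) (by simp) (by simp) (by simp) (by simp)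
    · refine le_antisymm (upper 1 2 h) ?_
      exact aux_two_le_rank K _ _ hv1 hv4 (LinearMap.proj 0) (LinearMap.proj 3) h h
        (by simp) (by simp) (by simp) (by simp)
    · refine le_antisymm (upper 1 3 h) ?_
      exact aux_two_le_rank K _ _ hv2 hv4 (LinearMap.proj 0) (LinearMap.proj 2) h
        (neg_ne_zero.2 h) (by simp) (by simp) (by simp) (by simp)
    · refine le_antisymm (upper 2 3 h) ?_
      exact aux_two_le_rank K _ _ hv3 hv4 (LinearMap.proj 0) (LinearMap.proj 1) h h
        (by simp) (by simp) (by simp) (by simp)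
  have hfin : Module.finrank ℤ K = 2 := by
    apply Module.finrank_eq_of_rank_eq
    rw [hrank]; norm_num
  -- existence of a complement
  haveI : NoZeroSMulDivisors ℤ ((Fin 4 → ℤ) →ₗ[ℤ] ℤ) := by
    constructor
    intro c f h
    by_cases hc : c = 0
    · exact Or.inl hc
    · right
      apply LinearMap.ext
      intro x
      have := LinearMap.congr_fun h x
      simp only [LinearMap.smul_apply, LinearMap.zero_apply, smul_eq_mul] at this
      rcases mul_eq_zero.1 this with h' | h'
      · exact absurd h' hc
      · simpa using h'
  haveI : Module.Free ℤ ((Fin 4 → ℤ) ⧸ K) :=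
    Module.Free.of_equiv (δ.quotKerEquivRange).symm
  obtain ⟨s, hs⟩ := Module.projective_lifting_property K.mkQ LinearMap.id K.mkQ_surjective
  have hmemπ : ∀ x : Fin 4 → ℤ, x - s (K.mkQ x) ∈ K := by
    intro x
    have h1 := LinearMap.congr_fun hs (K.mkQ x)
    simp only [LinearMap.comp_apply, LinearMap.id_apply] at h1
    have h0 : K.mkQ (x - s (K.mkQ x)) = 0 := by
      rw [map_sub, h1, sub_self]
    rwa [Submodule.mkQ_apply, Submodule.Quotient.mk_eq_zero] at h0
  set π : (Fin 4 → ℤ) →ₗ[ℤ] K :=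
    LinearMap.codRestrict K (LinearMap.id - s ∘ₗ K.mkQ) (fun x => by simpa using hmemπ x)
      with hπ
  have hproj : ∀ x : K, π x = x := by
    intro x
    apply Subtype.ext
    have hx0 : K.mkQ (x : Fin 4 → ℤ) = 0 := by
      rw [Submodule.mkQ_apply, Submodule.Quotient.mk_eq_zero]
      exact x.2
    simp [hπ, LinearMap.codRestrict_apply, hx0]
  exact ⟨LinearMap.ker π, LinearMap.isCompl_of_proj hproj, hfin⟩
end

section
/- Let E be a free abelian group of rank 6 with a nondegenerate symmetric bilinear form of signature (3,3), extended ℝ-bilinearly to E_ℝ = E ⊗ ℝ. Fix κ, x₁, x₂ ∈ E_ℝ pairwise orthogonal with ⟨κ,κ⟩ > 0, ⟨x₁,x₁⟩ > 0, ⟨x₂,x₂⟩ > 0, and fix λ > 0, ε > 0, c > 0. Then the set of δ ∈ E with ⟨δ,δ⟩ = 0, 0 < ⟨κ,δ⟩ ≤ λ, |⟨δ,x₁⟩| ≤ ε·‖δ‖, and |⟨δ,x₂⟩| ≤ ε·‖δ‖ is bounded in norm for ε sufficiently small; in particular, for ε small enough this set is finite. -/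
private lemma stmt10_aux1 {p q r s a b c d : ℝ} (hp : 0 < p) (hq : 0 < q)
    (hr : 0 < r) (hs : 0 < s) (h : a ≠ 0 ∨ b ≠ 0 ∨ c ≠ 0 ∨ d ≠ 0) :
    0 < a^2 * p + b^2 * q + c^2 * r + d^2 * s := by
  have h1 : 0 ≤ a^2 * p := by positivity
  have h2 : 0 ≤ b^2 * q := by positivity
  have h3 : 0 ≤ c^2 * r := by positivity
  have h4 : 0 ≤ d^2 * s := by positivity
  rcases h with h | h | h | h
  · have : 0 < a^2 * p := mul_pos (by positivity) hp
    linarith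
  · have : 0 < b^2 * q := mul_pos (by positivity) hq
    linarith
  · have : 0 < c^2 * r := mul_pos (by positivity) hr
    linarith
  · have : 0 < d^2 * s := mul_pos (by positivity) hs
    linarith

private lemma stmt10_aux2 (s n : ℝ) (hs : s ≠ 0) :
    0 < 2 * ((1 + |n|)⁻¹ * s) * s + ((1 + |n|)⁻¹ * s)^2 * n := by
  have hη : (0:ℝ) < (1 + |n|)⁻¹ := by positivity
  have hkey : (1 + |n|)⁻¹ * (1 + |n|) = 1 := inv_mul_cancel₀ (by positivity)
  have hs2 : 0 < s * s := mul_self_pos.mpr hs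
  nlinarith [neg_abs_le n, abs_nonneg n, mul_pos hη hs2,
    mul_le_mul_of_nonneg_left (neg_abs_le n) hη.le,
    mul_pos (mul_pos hη hη) hs2]

private lemma stmt10_aux3 (x y : ℝ) : (2*x + 2*y)^2 ≤ 8*x^2 + 8*y^2 := by
  nlinarith [sq_nonneg (x - y)]

set_option maxHeartbeats 2000000 in
/-- local finiteness. Let `E` be a rank-6 lattice (discrete full
subgroup) in a 6-dimensional real normed space `V = E ⊗ ℝ` carrying a nondegenerate
symmetric bilinear form of signature (3,3). Fix pairwise orthogonal `κ, x₁, x₂` of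
positive square, `λ > 0` and `c > 0`. Then for all sufficiently small `ε > 0`, the set
`{δ ∈ E : ⟨δ,δ⟩ = 0, 0 < ⟨κ,δ⟩ ≤ λ, |⟨δ,x₁⟩| ≤ ε‖δ‖, |⟨δ,x₂⟩| ≤ ε‖δ‖}` is bounded in
norm, and in particular finite. -/
theorem stmt_10 (V : Type*) [NormedAddCommGroup V] [NormedSpace ℝ V]
    [FiniteDimensional ℝ V] (hdim : Module.finrank ℝ V = 6)
    (B : LinearMap.BilinForm ℝ V) (hsymm : B.IsSymm) (hnd : B.Nondegenerate)
    (hposdef3 : ∃ W : Submodule ℝ V, Module.finrank ℝ W = 3 ∧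
      ∀ x ∈ W, x ≠ 0 → 0 < B x x)
    (hmax : ∀ W : Submodule ℝ V, (∀ x ∈ W, x ≠ 0 → 0 < B x x) →
      Module.finrank ℝ W ≤ 3)
    (E : Submodule ℤ V) [DiscreteTopology E]
    (hspan : Submodule.span ℝ (E : Set V) = ⊤)
    (hint : ∀ x ∈ E, ∀ y ∈ E, ∃ n : ℤ, B x y = n)
    (κ x₁ x₂ : V)
    (hκx₁ : B κ x₁ = 0) (hκx₂ : B κ x₂ = 0) (hx₁x₂ : B x₁ x₂ = 0)
    (hκ : 0 < B κ κ) (hx₁ : 0 < B x₁ x₁) (hx₂ : 0 < B x₂ x₂)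
    (lam : ℝ) (hlam : 0 < lam) (c : ℝ) (hc : 0 < c) :
    ∃ ε₀ > 0, ∀ ε : ℝ, 0 < ε → ε ≤ ε₀ →
      (∃ C : ℝ, ∀ δ : V,
          δ ∈ E ∧ B δ δ = 0 ∧ 0 < B κ δ ∧ B κ δ ≤ lam ∧
            |B δ x₁| ≤ ε * ‖δ‖ ∧ |B δ x₂| ≤ ε * ‖δ‖ → ‖δ‖ ≤ C) ∧
      {δ : V | δ ∈ E ∧ B δ δ = 0 ∧ 0 < B κ δ ∧ B κ δ ≤ lam ∧
          |B δ x₁| ≤ ε * ‖δ‖ ∧ |B δ x₂| ≤ ε * ‖δ‖}.Finite := by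
  classical
  have hs : ∀ u v : V, B u v = B v u := fun u v => hsymm.eq u v
  have h10 : B x₁ κ = 0 := (hs x₁ κ).trans hκx₁
  have h20 : B x₂ κ = 0 := (hs x₂ κ).trans hκx₂
  have h21 : B x₂ x₁ = 0 := (hs x₂ x₁).trans hx₁x₂
  -- generic expansion lemma
  have hexp : ∀ (a b d : ℝ) (u : V),
      B (a•κ + b•x₁ + d•x₂ + u) (a•κ + b•x₁ + d•x₂ + u)
        = a^2 * B κ κ + b^2 * B x₁ x₁ + d^2 * B x₂ x₂
          + 2*a*(B κ u) + 2*b*(B x₁ u) + 2*d*(B x₂ u) + B u u := by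
    intro a b d u
    simp only [map_add, map_smul, LinearMap.add_apply, LinearMap.smul_apply, smul_eq_mul,
      hκx₁, hκx₂, hx₁x₂, h10, h20, h21, hs u κ, hs u x₁, hs u x₂]
    ring
  -- squares positivity
  -- step 1: no positive vectors orthogonal to κ,x₁,x₂
  have hpos4 : ∀ v : V, B v κ = 0 → B v x₁ = 0 → B v x₂ = 0 → 0 < B v v → False := by
    intro v hvκ hvx₁ hvx₂ hvv
    have hκv : B κ v = 0 := (hs κ v).trans hvκ
    have hx₁v : B x₁ v = 0 := (hs x₁ v).trans hvx₁
    have hx₂v : B x₂ v = 0 := (hs x₂ v).trans hvx₂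
    have key : ∀ (g : Fin 4 → ℝ),
        B (∑ i, g i • ![κ,x₁,x₂,v] i) (∑ i, g i • ![κ,x₁,x₂,v] i)
          = (g 0)^2 * B κ κ + (g 1)^2 * B x₁ x₁ + (g 2)^2 * B x₂ x₂ + (g 3)^2 * B v v := by
      intro g
      rw [Fin.sum_univ_four]
      simp only [Matrix.cons_val_zero, Matrix.cons_val_one, Matrix.head_cons,
        Matrix.cons_val_two, Matrix.tail_cons, Matrix.cons_val_three]
      rw [hexp (g 0) (g 1) (g 2) (g 3 • v)]
      simp only [map_smul, smul_eq_mul, hκv, hx₁v, hx₂v, LinearMap.smul_apply]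
      ring
    have hsq : ∀ g : Fin 4 → ℝ, (∃ i, g i ≠ 0) →
        0 < (g 0)^2 * B κ κ + (g 1)^2 * B x₁ x₁ + (g 2)^2 * B x₂ x₂ + (g 3)^2 * B v v := by
      intro g ⟨i, hi⟩
      apply stmt10_aux1 hκ hx₁ hx₂ hvv
      fin_cases i
      · exact Or.inl hi
      · exact Or.inr (Or.inl hi)
      · exact Or.inr (Or.inr (Or.inl hi))
      · exact Or.inr (Or.inr (Or.inr hi))
    have hli : LinearIndependent ℝ ![κ,x₁,x₂,v] := by
      rw [Fintype.linearIndependent_iff]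
      intro g hg
      by_contra h
      push_neg at h
      obtain ⟨i, hi⟩ := h
      have h1 := key g
      rw [hg] at h1
      simp only [map_zero, LinearMap.zero_apply] at h1
      have := hsq g ⟨i, hi⟩
      linarith [this, h1.symm.le]
    have hWpos : ∀ x ∈ Submodule.span ℝ (Set.range ![κ,x₁,x₂,v]), x ≠ 0 → 0 < B x x := by
      intro x hx hx0
      obtain ⟨g, hg⟩ := (Submodule.mem_span_range_iff_exists_fun ℝ).mp hx
      have hgne : ∃ i, g i ≠ 0 := by
        by_contra h
        push_neg at h
        apply hx0
        rw [← hg]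
        simp [h]
      rw [← hg, key g]
      exact hsq g hgne
    have h4 : Module.finrank ℝ (Submodule.span ℝ (Set.range ![κ,x₁,x₂,v])) = 4 := by
      rw [finrank_span_eq_card hli]
      simp
    have := hmax _ hWpos
    omega
  -- step 2: negative definite on the orthogonal complement
  have hneg : ∀ w : V, B w κ = 0 → B w x₁ = 0 → B w x₂ = 0 → w ≠ 0 → B w w < 0 := by
    intro w h1 h2 h3 hw0
    by_contra h
    push_neg at h
    rcases h.lt_or_eq with hlt | heq
    · exact hpos4 w h1 h2 h3 hlt
    · -- heq : 0 = B w w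
      obtain ⟨u, hu⟩ : ∃ u, B w u ≠ 0 := by
        by_contra h'
        push_neg at h'
        exact hw0 (hnd.1 w h')
      set u' := u - (B u κ / B κ κ) • κ - (B u x₁ / B x₁ x₁) • x₁ - (B u x₂ / B x₂ x₂) • x₂
        with hu'def
      have hu'κ : B u' κ = 0 := by
        simp only [hu'def, map_sub, map_smul, LinearMap.sub_apply, LinearMap.smul_apply,
          smul_eq_mul, h10, h20]
        field_simp
        ring
      have hu'x₁ : B u' x₁ = 0 := by
        simp only [hu'def, map_sub, map_smul, LinearMap.sub_apply, LinearMap.smul_apply,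
          smul_eq_mul, hκx₁, h21]
        field_simp
        ring
      have hu'x₂ : B u' x₂ = 0 := by
        simp only [hu'def, map_sub, map_smul, LinearMap.sub_apply, LinearMap.smul_apply,
          smul_eq_mul, hκx₂, hx₁x₂]
        field_simp
        ring
      have hwu' : B w u' = B w u := by
        simp only [hu'def, map_sub, map_smul, smul_eq_mul, h1, h2, h3]
        ring
      have hwu'ne : B w u' ≠ 0 := by rw [hwu']; exact hu
      obtain ⟨t, ht⟩ : ∃ t : ℝ, 0 < 2*t*(B w u') + t^2 * (B u' u') :=
        ⟨(1 + |B u' u'|)⁻¹ * B w u', stmt10_aux2 _ _ hwu'ne⟩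
      have hvval : B (w + t • u') (w + t • u')
          = 2*t*(B w u') + t^2*(B u' u') + B w w := by
        simp only [map_add, map_smul, LinearMap.add_apply, LinearMap.smul_apply,
          smul_eq_mul, hs u' w]
        ring
      refine hpos4 (w + t • u') ?_ ?_ ?_ ?_
      · simp only [map_add, map_smul, LinearMap.add_apply, LinearMap.smul_apply,
          smul_eq_mul, h1, hu'κ]; ring
      · simp only [map_add, map_smul, LinearMap.add_apply, LinearMap.smul_apply,
          smul_eq_mul, h2, hu'x₁]; ring
      · simp only [map_add, map_smul, LinearMap.add_apply, LinearMap.smul_apply,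
          smul_eq_mul, h3, hu'x₂]; ring
      · rw [hvval, ← heq]; linarith
  -- step 3: quantitative negativity
  have hquant : ∃ m : ℝ, 0 < m ∧ ∀ w : V, B w κ = 0 → B w x₁ = 0 → B w x₂ = 0 →
      B w w ≤ -(m * ‖w‖^2) := by
    have hcont : Continuous fun w : V => B w w := by
      have h := ContinuousLinearMap.continuous₂ (LinearMap.toContinuousLinearMap
        ((LinearMap.toContinuousLinearMap : (V →ₗ[ℝ] ℝ) ≃ₗ[ℝ] (V →L[ℝ] ℝ)).toLinearMap ∘ₗ B))
      exact h.comp (continuous_id.prodMk continuous_id)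
    have hc1 : Continuous fun w : V => B w κ := (B.flip κ).continuous_of_finiteDimensional
    have hc2 : Continuous fun w : V => B w x₁ := (B.flip x₁).continuous_of_finiteDimensional
    have hc3 : Continuous fun w : V => B w x₂ := (B.flip x₂).continuous_of_finiteDimensional
    set K : Set V := {w | B w κ = 0 ∧ B w x₁ = 0 ∧ B w x₂ = 0} ∩ Metric.sphere 0 1 with hK
    have hKclosed : IsClosed K := by
      apply IsClosed.inter
      · exact ((isClosed_singleton.preimage hc1).inter
          ((isClosed_singleton.preimage hc2).inter (isClosed_singleton.preimage hc3)))
      · exact Metric.isClosed_sphere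
    have hKcpt : IsCompact K :=
      (isCompact_sphere (0:V) 1).inter_left
        ((isClosed_singleton.preimage hc1).inter
          ((isClosed_singleton.preimage hc2).inter (isClosed_singleton.preimage hc3)))
    rcases K.eq_empty_or_nonempty with hKe | hKne
    · refine ⟨1, one_pos, fun w hw1 hw2 hw3 => ?_⟩
      rcases eq_or_ne w 0 with rfl | hw0
      · simp
      · exfalso
        have : ‖w‖⁻¹ • w ∈ K := by
          constructor
          · refine ⟨?_, ?_, ?_⟩ <;>
              simp [map_smul, smul_eq_mul, hw1, hw2, hw3]
          · rw [mem_sphere_zero_iff_norm, norm_smul, norm_inv, norm_norm]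
            exact inv_mul_cancel₀ (norm_ne_zero_iff.mpr hw0)
        rw [hKe] at this
        exact this
    · obtain ⟨w₀, hw₀K, hmax₀⟩ := hKcpt.exists_isMaxOn hKne hcont.continuousOn
      have hw₀n : ‖w₀‖ = 1 := mem_sphere_zero_iff_norm.mp hw₀K.2
      have hw₀0 : w₀ ≠ 0 := by
        intro h; rw [h, norm_zero] at hw₀n; exact one_ne_zero hw₀n.symm
      have hm : 0 < -(B w₀ w₀) := by
        have := hneg w₀ hw₀K.1.1 hw₀K.1.2.1 hw₀K.1.2.2 hw₀0
        linarith
      refine ⟨-(B w₀ w₀), hm, fun w hw1 hw2 hw3 => ?_⟩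
      rcases eq_or_ne w 0 with rfl | hw0
      · simp
      · have hn : 0 < ‖w‖ := norm_pos_iff.mpr hw0
        have hmem : ‖w‖⁻¹ • w ∈ K := by
          constructor
          · refine ⟨?_, ?_, ?_⟩ <;>
              simp [map_smul, smul_eq_mul, hw1, hw2, hw3]
          · rw [mem_sphere_zero_iff_norm, norm_smul, norm_inv, norm_norm]
            exact inv_mul_cancel₀ hn.ne'
        have hle := hmax₀ hmem
        simp only [Set.mem_setOf_eq, map_smul, LinearMap.smul_apply, smul_eq_mul] at hle
        -- hle : ‖w‖⁻¹ * (‖w‖⁻¹ * B w w) ≤ B w₀ w₀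
        have hrw : B w w = (‖w‖ * ‖w‖) * (‖w‖⁻¹ * (‖w‖⁻¹ * B w w)) := by
          field_simp
        rw [hrw]
        calc (‖w‖ * ‖w‖) * (‖w‖⁻¹ * (‖w‖⁻¹ * B w w))
            ≤ (‖w‖ * ‖w‖) * (B w₀ w₀) := by
              apply mul_le_mul_of_nonneg_left hle (by positivity)
          _ = -(-(B w₀ w₀) * ‖w‖^2) := by ring
  obtain ⟨m, hm, hmbound⟩ := hquant
  -- step 4: constants
  obtain ⟨A, hA⟩ : ∃ x : ℝ, x = lam / B κ κ := ⟨_, rfl⟩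
  have hA0 : 0 < A := by rw [hA]; exact div_pos hlam hκ
  obtain ⟨Dc, hDc⟩ : ∃ x : ℝ, x = ‖x₁‖ / B x₁ x₁ + ‖x₂‖ / B x₂ x₂ := ⟨_, rfl⟩
  have hDc0 : 0 ≤ Dc := by rw [hDc]; positivity
  obtain ⟨Qc, hQc⟩ : ∃ x : ℝ, x = 1 / B x₁ x₁ + 1 / B x₂ x₂ := ⟨_, rfl⟩
  have hQc0 : 0 < Qc := by rw [hQc]; positivity
  obtain ⟨ε₀, hε₀⟩ : ∃ x : ℝ, x = min (2 * (Dc + 1))⁻¹ (Real.sqrt (m / (16 * (Qc + 1)))) := ⟨_, rfl⟩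
  have hε₀0 : 0 < ε₀ := by
    rw [hε₀]
    apply lt_min
    · positivity
    · apply Real.sqrt_pos.mpr
      positivity
  refine ⟨ε₀, hε₀0, fun ε hε hεle => ?_⟩
  -- bounds on ε
  have hεD : ε * Dc ≤ 1/2 := by
    have h1 : ε ≤ (2 * (Dc + 1))⁻¹ := (hεle.trans_eq hε₀).trans (min_le_left _ _)
    have h2 : (2 * (Dc + 1))⁻¹ * (2 * (Dc + 1)) = 1 := inv_mul_cancel₀ (by positivity)
    have h3 : (0:ℝ) ≤ (2 * (Dc + 1))⁻¹ := by positivity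
    linarith [mul_le_mul_of_nonneg_right h1 hDc0]
  have hεQ : 8 * ε^2 * Qc ≤ m / 2 := by
    have h1 : ε ≤ Real.sqrt (m / (16 * (Qc + 1))) := (hεle.trans_eq hε₀).trans (min_le_right _ _)
    have h2 : ε^2 ≤ m / (16 * (Qc + 1)) := by
      rw [← Real.le_sqrt hε.le (by positivity)] at *
      exact h1
    have h3 : m / (16 * (Qc + 1)) * (16 * (Qc + 1)) = m := by field_simp
    have h4 : (0:ℝ) ≤ m / (16 * (Qc + 1)) := by positivity
    linarith [mul_le_mul_of_nonneg_right h2 hQc0.le]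
  -- the uniform bound C
  obtain ⟨R, hR⟩ : ∃ x : ℝ, x = A^2 * B κ κ + (m/2) * A^2 * ‖κ‖^2 := ⟨_, rfl⟩
  have hR0 : 0 < R := by rw [hR]; positivity
  obtain ⟨C, hC⟩ : ∃ x : ℝ, x = 2 * A * ‖κ‖ + 2 * Real.sqrt (2 * R / m) := ⟨_, rfl⟩
  have hbound : ∀ δ : V,
      δ ∈ E ∧ B δ δ = 0 ∧ 0 < B κ δ ∧ B κ δ ≤ lam ∧
        |B δ x₁| ≤ ε * ‖δ‖ ∧ |B δ x₂| ≤ ε * ‖δ‖ → ‖δ‖ ≤ C := by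
    rintro δ ⟨-, hδδ, hκδ0, hκδlam, hδ1, hδ2⟩
    obtain ⟨a, ha⟩ : ∃ x : ℝ, x = B κ δ / B κ κ := ⟨_, rfl⟩
    obtain ⟨b, hb⟩ : ∃ x : ℝ, x = B δ x₁ / B x₁ x₁ := ⟨_, rfl⟩
    obtain ⟨d, hd⟩ : ∃ x : ℝ, x = B δ x₂ / B x₂ x₂ := ⟨_, rfl⟩
    obtain ⟨w, hw⟩ : ∃ u : V, u = δ - a•κ - b•x₁ - d•x₂ := ⟨_, rfl⟩
    have hδeq : δ = a•κ + b•x₁ + d•x₂ + w := by rw [hw]; abel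
    have hwκ : B w κ = 0 := by
      simp only [hw, map_sub, map_smul, LinearMap.sub_apply, LinearMap.smul_apply,
        smul_eq_mul, h10, h20, hs δ κ, ha]
      field_simp
      ring
    have hwx₁ : B w x₁ = 0 := by
      simp only [hw, map_sub, map_smul, LinearMap.sub_apply, LinearMap.smul_apply,
        smul_eq_mul, hκx₁, h21, hb]
      field_simp
      ring
    have hwx₂ : B w x₂ = 0 := by
      simp only [hw, map_sub, map_smul, LinearMap.sub_apply, LinearMap.smul_apply,
        smul_eq_mul, hκx₂, hx₁x₂, hd]
      field_simp
      ring
    have hκw : B κ w = 0 := (hs κ w).trans hwκ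
    have hx₁w : B x₁ w = 0 := (hs x₁ w).trans hwx₁
    have hx₂w : B x₂ w = 0 := (hs x₂ w).trans hwx₂
    have henergy : a^2 * B κ κ + b^2 * B x₁ x₁ + d^2 * B x₂ x₂ + B w w = 0 := by
      have h1 : B δ δ = a^2 * B κ κ + b^2 * B x₁ x₁ + d^2 * B x₂ x₂ + B w w := by
        conv_lhs => rw [hδeq]
        rw [hexp a b d w, hκw, hx₁w, hx₂w]
        ring
      rw [← h1, hδδ]
    -- coefficient bounds
    have haabs : |a| ≤ A := by
      rw [ha, hA, abs_div, abs_of_pos hκ, abs_of_pos hκδ0]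
      exact (div_le_div_iff_of_pos_right hκ).mpr hκδlam
    have hbabs : |b| ≤ ε * ‖δ‖ / B x₁ x₁ := by
      rw [hb, abs_div, abs_of_pos hx₁]
      exact (div_le_div_iff_of_pos_right hx₁).mpr hδ1
    have hdabs : |d| ≤ ε * ‖δ‖ / B x₂ x₂ := by
      rw [hd, abs_div, abs_of_pos hx₂]
      exact (div_le_div_iff_of_pos_right hx₂).mpr hδ2
    -- norm decomposition bound
    have hnδ : ‖δ‖ ≤ |a| * ‖κ‖ + |b| * ‖x₁‖ + |d| * ‖x₂‖ + ‖w‖ := by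
      conv_lhs => rw [hδeq]
      have t0 := norm_add_le (a•κ + b•x₁ + d•x₂) w
      have t1 := norm_add_le (a•κ + b•x₁) (d•x₂)
      have t2 := norm_add_le (a•κ) (b•x₁)
      simp only [norm_smul, Real.norm_eq_abs] at t0 t1 t2 ⊢
      linarith
    have step : ‖δ‖ ≤ A * ‖κ‖ + ε * Dc * ‖δ‖ + ‖w‖ := by
      have t1 : |a| * ‖κ‖ ≤ A * ‖κ‖ := mul_le_mul_of_nonneg_right haabs (norm_nonneg κ)
      have t2 : |b| * ‖x₁‖ ≤ (ε * ‖δ‖ / B x₁ x₁) * ‖x₁‖ :=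
        mul_le_mul_of_nonneg_right hbabs (norm_nonneg x₁)
      have t3 : |d| * ‖x₂‖ ≤ (ε * ‖δ‖ / B x₂ x₂) * ‖x₂‖ :=
        mul_le_mul_of_nonneg_right hdabs (norm_nonneg x₂)
      have hring : ε * Dc * ‖δ‖
          = (ε * ‖δ‖ / B x₁ x₁) * ‖x₁‖ + (ε * ‖δ‖ / B x₂ x₂) * ‖x₂‖ := by
        rw [hDc]; ring
      linarith
    have hδbound : ‖δ‖ ≤ 2 * A * ‖κ‖ + 2 * ‖w‖ := by
      have t := mul_le_mul_of_nonneg_right hεD (norm_nonneg δ)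
      linarith [step, t]
    -- energy bound
    have ha2 : a^2 ≤ A^2 := by
      rw [← sq_abs a]
      exact pow_le_pow_left₀ (abs_nonneg a) haabs 2
    have hb2 : b^2 ≤ (ε * ‖δ‖ / B x₁ x₁)^2 := by
      rw [← sq_abs b]
      exact pow_le_pow_left₀ (abs_nonneg b) hbabs 2
    have hd2 : d^2 ≤ (ε * ‖δ‖ / B x₂ x₂)^2 := by
      rw [← sq_abs d]
      exact pow_le_pow_left₀ (abs_nonneg d) hdabs 2
    have hb2q : b^2 * B x₁ x₁ ≤ ε^2 * ‖δ‖^2 * (1 / B x₁ x₁) := by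
      have e1 : (ε * ‖δ‖ / B x₁ x₁)^2 * B x₁ x₁ = ε^2 * ‖δ‖^2 * (1 / B x₁ x₁) := by
        field_simp
      calc b^2 * B x₁ x₁ ≤ (ε * ‖δ‖ / B x₁ x₁)^2 * B x₁ x₁ :=
            mul_le_mul_of_nonneg_right hb2 hx₁.le
        _ = ε^2 * ‖δ‖^2 * (1 / B x₁ x₁) := e1
    have hd2r : d^2 * B x₂ x₂ ≤ ε^2 * ‖δ‖^2 * (1 / B x₂ x₂) := by
      have e1 : (ε * ‖δ‖ / B x₂ x₂)^2 * B x₂ x₂ = ε^2 * ‖δ‖^2 * (1 / B x₂ x₂) := by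
        field_simp
      calc d^2 * B x₂ x₂ ≤ (ε * ‖δ‖ / B x₂ x₂)^2 * B x₂ x₂ :=
            mul_le_mul_of_nonneg_right hd2 hx₂.le
        _ = ε^2 * ‖δ‖^2 * (1 / B x₂ x₂) := e1
    have hWW := hmbound w hwκ hwx₁ hwx₂
    have hmw : m * ‖w‖^2 ≤ A^2 * B κ κ + ε^2 * ‖δ‖^2 * Qc := by
      have ha2p : a^2 * B κ κ ≤ A^2 * B κ κ := mul_le_mul_of_nonneg_right ha2 hκ.le
      have hQring : ε^2 * ‖δ‖^2 * Qc
          = ε^2 * ‖δ‖^2 * (1 / B x₁ x₁) + ε^2 * ‖δ‖^2 * (1 / B x₂ x₂) := by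
        rw [hQc]; ring
      linarith
    have hδsq : ‖δ‖^2 ≤ 8 * A^2 * ‖κ‖^2 + 8 * ‖w‖^2 := by
      have h1 : ‖δ‖^2 ≤ (2 * A * ‖κ‖ + 2 * ‖w‖)^2 :=
        pow_le_pow_left₀ (norm_nonneg δ) hδbound 2
      have h2 : (2 * A * ‖κ‖ + 2 * ‖w‖)^2 ≤ 8 * A^2 * ‖κ‖^2 + 8 * ‖w‖^2 := by
        have := stmt10_aux3 (A * ‖κ‖) ‖w‖
        calc (2 * A * ‖κ‖ + 2 * ‖w‖)^2 = (2*(A*‖κ‖) + 2*‖w‖)^2 := by ring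
          _ ≤ 8*(A*‖κ‖)^2 + 8*‖w‖^2 := this
          _ = 8 * A^2 * ‖κ‖^2 + 8 * ‖w‖^2 := by ring
      linarith
    have hfin : (m/2) * ‖w‖^2 ≤ R := by
      have t1 : ε^2 * ‖δ‖^2 * Qc ≤ ε^2 * Qc * (8 * A^2 * ‖κ‖^2 + 8 * ‖w‖^2) := by
        have := mul_le_mul_of_nonneg_left hδsq (by positivity : (0:ℝ) ≤ ε^2 * Qc)
        linarith [this]
      have t2 : ε^2 * Qc * (8 * ‖w‖^2) ≤ (m/2) * ‖w‖^2 := by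
        have := mul_le_mul_of_nonneg_right hεQ (sq_nonneg ‖w‖)
        linarith [this]
      have t3 : ε^2 * Qc * (8 * A^2 * ‖κ‖^2) ≤ (m/2) * (A^2 * ‖κ‖^2) := by
        have := mul_le_mul_of_nonneg_right hεQ
          (by positivity : (0:ℝ) ≤ A^2 * ‖κ‖^2)
        linarith [this]
      rw [hR]
      linarith [hmw, t1, t2, t3]
    have hwle : ‖w‖ ≤ Real.sqrt (2 * R / m) := by
      rw [Real.le_sqrt (norm_nonneg w) (by positivity)]
      rw [le_div_iff₀ hm]
      linarith
    rw [hC]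
    linarith
  exact ⟨⟨C, hbound⟩, by
    have hsub : {δ : V | δ ∈ E ∧ B δ δ = 0 ∧ 0 < B κ δ ∧ B κ δ ≤ lam ∧
        |B δ x₁| ≤ ε * ‖δ‖ ∧ |B δ x₂| ≤ ε * ‖δ‖} ⊆ (E : Set V) ∩ Metric.closedBall 0 C :=
      fun δ hδ => ⟨hδ.1, by
        rw [Metric.mem_closedBall, dist_zero_right]; exact hbound δ hδ⟩
    have hdE : DiscreteTopology E.toAddSubgroup := ‹DiscreteTopology E›
    have hEc : IsClosed (E : Set V) := AddSubgroup.isClosed_of_discrete (H := E.toAddSubgroup)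
    have hcpt : IsCompact ((E:Set V) ∩ Metric.closedBall 0 C) :=
      (isCompact_closedBall 0 C).inter_left hEc
    have hdset : DiscreteTopology ((E : Set V) : Set V) := ‹DiscreteTopology E›
    have hdisc : DiscreteTopology ((E:Set V) ∩ Metric.closedBall 0 C : Set V) :=
      DiscreteTopology.of_subset hdset Set.inter_subset_left
    exact (hcpt.finite (isDiscrete_iff_discreteTopology.mpr hdisc)).subset hsub⟩
end
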